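/- For every positive integer n, the polynomial identity w_n(-1-x) = (-1)^{n-1} · w_n(x) holds in ℤ[x]. -/

import Mathlib

open Polynomial

/-- `w(n,k) = C(n-1,k-1)·C(n+k,k) − C(n,k)·C(n+k,k-1)`. -/
def w (n k : ℕ) : ℤ :=
  ((n - 1).choose (k - 1) * (n + k).choose k : ℤ) - (n.choose k * (n + k).choose (k - 1) : ℤ)

/-- `w_n(x) = ∑_{k=1}^{n} w(n,k) x^{k-1}` in `ℤ[x]`. -/
noncomputable def wPoly (n : ℕ) : Polynomial ℤ :=
  ∑ k ∈ Finset.Icc 1 n, Polynomial.C (w n k) * X ^ (k - 1)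

open Finset in
/-- Key binomial identity: `∑_{k≤m} C(n,k)² C(n-k,m-k) = C(n,m) C(n+m,m)`. -/
lemma key_nat (n m : ℕ) (hm : m ≤ n) :
    ∑ k ∈ range (m+1), n.choose k ^ 2 * (n-k).choose (m-k) = n.choose m * (n+m).choose m := by
  have h1 : ∀ k ∈ range (m+1), n.choose k ^ 2 * (n-k).choose (m-k)
      = n.choose m * (n.choose k * m.choose k) := by
    intro k hk
    have hk' : k ≤ m := Nat.lt_succ_iff.mp (mem_range.mp hk)
    have := Nat.choose_mul (n := n) hk'
    calc n.choose k ^ 2 * (n-k).choose (m-k) = n.choose k * (n.choose k * (n-k).choose (m-k)) := by ring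
    _ = n.choose k * (n.choose m * m.choose k) := by rw [← this]
    _ = n.choose m * (n.choose k * m.choose k) := by ring
  rw [Finset.sum_congr rfl h1, ← Finset.mul_sum]
  congr 1
  rw [Nat.add_choose_eq n m m, Finset.Nat.sum_antidiagonal_eq_sum_range_succ
    (fun x y => n.choose x * m.choose y) m]
  refine Finset.sum_congr rfl fun k hk => ?_
  rw [Nat.choose_symm (Nat.lt_succ_iff.mp (mem_range.mp hk))]

open Finset in
/-- `Q_n(x) = ∑_{k=0}^n C(n,k) C(n+k,k) x^k`, the shifted Legendre-type polynomial. -/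
noncomputable def Q (n : ℕ) : Polynomial ℤ :=
  ∑ k ∈ range (n+1), C ((n.choose k * (n+k).choose k : ℕ) : ℤ) * X ^ k

open Finset in
/-- Alternate form: `R_n(x) = ∑ C(n,k)² (1+x)^{n-k} x^k`. -/
noncomputable def R (n : ℕ) : Polynomial ℤ :=
  ∑ k ∈ range (n+1), C (((n.choose k : ℕ) : ℤ)^2) * (1 + X) ^ (n - k) * X ^ k

open Finset in
lemma Q_eq_R (n : ℕ) : Q n = R n := by
  ext m
  rw [Q, R, finset_sum_coeff, finset_sum_coeff]
  have hR : ∀ k, (C (((n.choose k : ℕ) : ℤ)^2) * (1 + X) ^ (n - k) * X ^ k).coeff m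
      = if k ≤ m then (((n.choose k)^2 * (n-k).choose (m-k) : ℕ) : ℤ) else 0 := by
    intro k
    rw [coeff_mul_X_pow', coeff_C_mul, coeff_one_add_X_pow]
    push_cast
    split <;> simp
  have hQ : ∀ k, (C ((n.choose k * (n+k).choose k : ℕ) : ℤ) * X ^ k).coeff m
      = if m = k then ((n.choose k * (n+k).choose k : ℕ) : ℤ) else 0 := by
    intro k; rw [coeff_C_mul, coeff_X_pow]; split <;> simp
  rw [Finset.sum_congr rfl fun k _ => hQ k, Finset.sum_congr rfl fun k _ => hR k,
    Finset.sum_ite_eq (range (n+1)) m]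
  by_cases hm : m ≤ n
  · rw [if_pos (mem_range.mpr (Nat.lt_succ_of_le hm))]
    rw [← Finset.sum_subset (Finset.range_subset_range.mpr (Nat.succ_le_succ hm))
      (fun k _ hk => by
        rw [if_neg]; intro h
        exact hk (mem_range.mpr (Nat.lt_succ_of_le h)))]
    rw [Finset.sum_congr rfl (fun k hk => if_pos (Nat.lt_succ_iff.mp (mem_range.mp hk)))]
    rw [← Nat.cast_sum, key_nat n m hm]
  · rw [if_neg (fun h => hm (Nat.lt_succ_iff.mp (mem_range.mp h)))]
    refine (Finset.sum_eq_zero fun k hk => ?_).symm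
    have hkn : k ≤ n := Nat.lt_succ_iff.mp (mem_range.mp hk)
    split
    · have : n - k < m - k := by omega
      rw [Nat.choose_eq_zero_of_lt this]; simp
    · rfl

open Finset in
lemma R_comp (n : ℕ) : (R n).comp (-1 - X) = (-1 : Polynomial ℤ)^n * R n := by
  rw [R, Finset.mul_sum]
  have hcomp : (∑ k ∈ range (n+1), C (((n.choose k : ℕ) : ℤ)^2) * (1 + X) ^ (n - k) * X ^ k).comp (-1 - X)
      = ∑ k ∈ range (n+1), C (((n.choose k : ℕ) : ℤ)^2) * (1 + (-1 - X)) ^ (n - k) * (-1 - X) ^ k := by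
    simp only [Polynomial.comp, eval₂_finset_sum, eval₂_mul, eval₂_pow, eval₂_add, eval₂_one,
      eval₂_X, eval₂_C]
  rw [hcomp]
  have hterm : ∀ k ∈ range (n+1),
      C (((n.choose k : ℕ) : ℤ)^2) * (1 + (-1 - X)) ^ (n - k) * (-1 - X) ^ k
      = (-1:Polynomial ℤ)^n * (C (((n.choose k : ℕ) : ℤ)^2) * (1 + X) ^ k * X ^ (n - k)) := by
    intro k hk
    have hkn : k ≤ n := Nat.lt_succ_iff.mp (mem_range.mp hk)
    have h1 : (1 + (-1 - X) : Polynomial ℤ) = -X := by ring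
    have h2 : (-1 - X : Polynomial ℤ) = -(1 + X) := by ring
    rw [h1, h2, neg_pow (X : Polynomial ℤ) (n-k), neg_pow (1+X : Polynomial ℤ) k]
    have : (-1:Polynomial ℤ)^(n-k) * (-1:Polynomial ℤ)^k = (-1)^n := by
      rw [← pow_add]; congr 1; omega
    calc C (((n.choose k : ℕ) : ℤ)^2) * ((-1)^(n-k) * X ^ (n - k)) * ((-1)^k * (1+X) ^ k)
        = ((-1:Polynomial ℤ)^(n-k) * (-1)^k) * (C (((n.choose k : ℕ) : ℤ)^2) * (1 + X) ^ k * X ^ (n - k)) := by ring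
      _ = _ := by rw [this]
  rw [Finset.sum_congr rfl hterm]
  rw [← Finset.sum_range_reflect
    (fun k => (-1:Polynomial ℤ)^n * (C (((n.choose k : ℕ) : ℤ)^2) * (1 + X) ^ (n - k) * X ^ k)) (n+1)]
  refine Finset.sum_congr rfl fun j hj => ?_
  have hjn : j ≤ n := Nat.lt_succ_iff.mp (mem_range.mp hj)
  have e1 : n + 1 - 1 - j = n - j := by omega
  have e2 : n - (n - j) = j := by omega
  rw [e1, e2, Nat.choose_symm hjn]

lemma Q_comp (n : ℕ) : (Q n).comp (-1 - X) = (-1 : Polynomial ℤ)^n * Q n := by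
  rw [Q_eq_R, R_comp]

lemma w_mul (n k : ℕ) (h1 : 1 ≤ k) (h2 : k ≤ n) :
    ((n:ℤ) * (n+1)) * w n k = (k : ℤ) * ((n.choose k * (n+k).choose k : ℕ) : ℤ) := by
  obtain ⟨m, rfl⟩ := Nat.exists_eq_add_of_le h1
  obtain ⟨j, rfl⟩ := Nat.exists_eq_add_of_le h2
  set k := 1 + m
  set n := k + j
  have ha : n * ((n-1).choose (k-1)) = n.choose k * k := by
    have : n = (n-1) + 1 := by omega
    rw [this]
    have : k = (k-1) + 1 := by omega
    rw [this, ← Nat.add_one_mul_choose_eq]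
    rfl
  have hb : (n+k).choose k * k = (n+k).choose (k-1) * (n+1) := by
    have hk : k = (k-1)+1 := by omega
    have := Nat.choose_succ_right_eq (n+k) (k-1)
    rw [← hk] at this
    rw [this]
    congr 1
    omega
  have ha' : (n : ℤ) * ((n-1).choose (k-1) : ℕ) = ((n.choose k : ℕ) : ℤ) * k := by
    exact_mod_cast congrArg (Nat.cast : ℕ → ℤ) ha
  have hb' : (((n+k).choose k : ℕ) : ℤ) * k = (((n+k).choose (k-1) : ℕ) : ℤ) * ((n:ℤ)+1) := by
    exact_mod_cast congrArg (Nat.cast : ℕ → ℤ) hb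
  have hcast : ((n - 1 : ℕ) : ℤ) = (n : ℤ) - 1 := by
    have : 1 ≤ n := by omega
    omega
  rw [w]
  push_cast [hcast]
  push_cast at ha' hb'
  linear_combination ((n:ℤ)+1) * (((n+k).choose k : ℕ) : ℤ) * ha' + (n:ℤ) * ((n.choose k : ℕ) : ℤ) * hb'

open Finset in
lemma derivative_Q (n : ℕ) :
    derivative (Q n) = C ((n:ℤ) * (n+1)) * wPoly n := by
  rw [Q, map_sum]
  have hterm : ∀ k, derivative (C ((n.choose k * (n+k).choose k : ℕ) : ℤ) * X ^ k)
      = C ((k:ℤ) * ((n.choose k * (n+k).choose k : ℕ) : ℤ)) * X ^ (k-1) := by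
    intro k
    rw [derivative_C_mul, derivative_X_pow, map_mul, mul_comm (C (k:ℤ)), mul_assoc, map_natCast]
    push_cast
    ring
  rw [Finset.sum_congr rfl fun k _ => hterm k, Finset.sum_range_succ']
  simp only [Nat.cast_zero, zero_mul, map_zero, zero_mul, add_zero]
  rw [wPoly, Finset.mul_sum]
  rw [← Finset.Ico_add_one_right_eq_Icc, Finset.sum_Ico_eq_sum_range]
  simp only [Nat.add_sub_cancel]
  refine Finset.sum_congr rfl fun i hi => ?_
  have hi' : i < n := mem_range.mp hi
  rw [← mul_assoc, ← map_mul, ← w_mul n (i+1) (by omega) (by omega)]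
  have h1 : 1 + i = i + 1 := by omega
  rw [h1]
  norm_num

/-- For every positive integer `n`, `w_n(-1-x) = (-1)^{n-1} w_n(x)` in `ℤ[x]`. -/
theorem wPoly_comp_neg (n : ℕ) (hn : 1 ≤ n) :
    (wPoly n).comp (-1 - X) = (-1 : Polynomial ℤ) ^ (n - 1) * wPoly n := by
  have h := congrArg derivative (Q_comp n)
  rw [derivative_comp] at h
  have hd : derivative (-1 - X : Polynomial ℤ) = -1 := by
    simp
  rw [hd] at h
  have hneg : ((-1 : Polynomial ℤ)^n : Polynomial ℤ) = C ((-1:ℤ)^n) := by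
    simp
  rw [hneg, derivative_C_mul] at h
  rw [derivative_Q] at h
  rw [mul_comp, C_comp] at h
  have hM : (C ((n:ℤ) * (n+1)) : Polynomial ℤ) ≠ 0 := by
    rw [Ne, C_eq_zero]
    positivity
  apply mul_left_cancel₀ hM
  have key : C ((n:ℤ) * (n+1)) * (wPoly n).comp (-1 - X)
      = C ((n:ℤ) * (n+1)) * ((-1 : Polynomial ℤ)^(n+1) * wPoly n) := by
    have : (-1 : Polynomial ℤ)^(n+1) = - C ((-1:ℤ)^n) := by
      rw [pow_succ]; simp
    rw [this]
    linear_combination -h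
  rw [key]
  congr 1
  congr 1
  have : n + 1 = (n - 1) + 2 := by omega
  rw [this, pow_add]
  norm_num
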